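/- Let p ∈ [1, ∞) with p ≠ 2, and define e ∈ M₂(ℂ) by e = (1/2)·[[1,1],[1,1]], acting on ℂ² with the ℓ^p norm. Then ‖e‖ = ‖1 − e‖ = 1 (operator norms), but e is not a hermitian idempotent, i.e., there exists λ ∈ ℝ with ‖exp(iλe)‖ > 1. -/

import Mathlib

open scoped ENNReal

set_option maxHeartbeats 1000000

theorem exp_idem {A : Type*} [NormedRing A] [NormedAlgebra ℂ A] [CompleteSpace A]
    (e : A) (he : e * e = e) (c : ℂ) :
    NormedSpace.exp (c • e) = 1 + (NormedSpace.exp c - 1) • e := by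
  have hpow : ∀ n : ℕ, (c • e) ^ (n + 1) = (c ^ (n + 1)) • e := by
    intro n
    induction n with
    | zero => simp
    | succ k ih =>
        rw [pow_succ, ih, smul_mul_assoc, mul_smul_comm, he, smul_smul, ← pow_succ]
  have hsA : Summable (fun n : ℕ => ((Nat.factorial n : ℂ))⁻¹ • (c • e) ^ n) :=
    NormedSpace.expSeries_summable' (𝕂 := ℂ) (c • e)
  have hsC : Summable (fun n : ℕ => ((Nat.factorial n : ℂ))⁻¹ • c ^ n) :=
    NormedSpace.expSeries_summable' (𝕂 := ℂ) c
  have hsC' : Summable (fun n : ℕ => ((Nat.factorial (n + 1) : ℂ))⁻¹ • c ^ (n + 1)) :=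
    (summable_nat_add_iff 1).mpr hsC
  have hC : NormedSpace.exp c = 1 + ∑' n : ℕ, ((Nat.factorial (n + 1) : ℂ))⁻¹ • c ^ (n + 1) := by
    simp only [NormedSpace.exp_eq_tsum (𝕂 := ℂ)]
    rw [Summable.tsum_eq_zero_add hsC]
    simp
  conv_lhs => simp only [NormedSpace.exp_eq_tsum (𝕂 := ℂ)]
  rw [Summable.tsum_eq_zero_add hsA]
  simp only [pow_zero, Nat.factorial_zero, Nat.cast_one, inv_one, one_smul, hpow]
  congr 1
  calc ∑' n : ℕ, (Nat.factorial (n + 1) : ℂ)⁻¹ • c ^ (n + 1) • e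
      = ∑' n : ℕ, (((Nat.factorial (n + 1) : ℂ))⁻¹ • c ^ (n + 1)) • e := by
        refine tsum_congr fun n => ?_
        rw [smul_smul, smul_eq_mul]
    _ = (∑' n : ℕ, ((Nat.factorial (n + 1) : ℂ))⁻¹ • c ^ (n + 1)) • e := Summable.tsum_smul_const hsC' e
    _ = (NormedSpace.exp c - 1) • e := by rw [hC, add_sub_cancel_left]

/-- For `p ∈ [1, ∞)`, `p ≠ 2`, the idempotent
`e = (1/2)[[1,1],[1,1]]` acting on `ℓ^p_2` satisfies `‖e‖ = ‖1 - e‖ = 1`, but `e` is not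
hermitian: `‖exp(iλe)‖ > 1` for some real `λ`. -/
theorem stmt_11 (p : ℝ≥0∞) [Fact (1 ≤ p)] (hp : p ≠ ⊤) (hp2 : p ≠ 2)
    (e : PiLp p (fun _ : Fin 2 => ℂ) →L[ℂ] PiLp p (fun _ : Fin 2 => ℂ))
    (he : ∀ (x : PiLp p (fun _ : Fin 2 => ℂ)) (i : Fin 2), e x i = (x 0 + x 1) / 2) :
    ‖e‖ = 1 ∧ ‖(1 : PiLp p (fun _ : Fin 2 => ℂ) →L[ℂ] PiLp p (fun _ : Fin 2 => ℂ)) - e‖ = 1 ∧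
      ∃ l : ℝ, 1 < ‖NormedSpace.exp (((l : ℂ) * Complex.I) • e)‖ := by
  set r := p.toReal with hr_def
  have hr1 : 1 ≤ r := by
    have h1 : (1 : ℝ≥0∞) ≤ p := Fact.out
    have := ENNReal.toReal_mono hp h1
    simpa using this
  have hr0 : (0 : ℝ) < r := lt_of_lt_of_le one_pos hr1
  have hr2 : r ≠ 2 := by
    intro h
    apply hp2
    have : p.toReal = (2 : ℝ≥0∞).toReal := by simpa using h
    exact (ENNReal.toReal_eq_toReal_iff' hp (by norm_num)).mp this
  have hnorm : ∀ x : PiLp p (fun _ : Fin 2 => ℂ),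
      ‖x‖ = (‖x 0‖ ^ r + ‖x 1‖ ^ r) ^ (1 / r) := by
    intro x
    rw [PiLp.norm_eq_sum hr0, Fin.sum_univ_two]
  -- key convexity inequality
  have key : ∀ s a b : ℝ, 0 ≤ s → 0 ≤ a → 0 ≤ b → s ≤ a + b →
      ((s / 2) ^ r + (s / 2) ^ r) ^ (1 / r) ≤ (a ^ r + b ^ r) ^ (1 / r) := by
    intro s a b hs ha hb hsab
    apply Real.rpow_le_rpow (by positivity) _ (by positivity)
    have h1 : (s / 2) ^ r ≤ ((a + b) / 2) ^ r :=
      Real.rpow_le_rpow (by positivity) (by linarith) hr0.le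
    have h2 := Real.rpow_arith_mean_le_arith_mean_rpow (Finset.univ : Finset (Fin 2))
      ![1/2, 1/2] ![a, b] (by intro i _; fin_cases i <;> norm_num)
      (by simp [Fin.sum_univ_two]; norm_num) (by intro i _; fin_cases i <;> simpa)
      hr1
    simp only [Fin.sum_univ_two, Matrix.cons_val_zero, Matrix.cons_val_one, Matrix.head_cons] at h2
    have h3 : ((a + b) / 2) ^ r ≤ a ^ r / 2 + b ^ r / 2 := by
      have : (1 / 2 * a + 1 / 2 * b) = (a + b) / 2 := by ring
      rw [this] at h2
      linarith
    linarith
  -- helper vector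
  have hvec : ∀ a b : ℂ, ((WithLp.equiv p (∀ _ : Fin 2, ℂ)).symm ![a, b]) 0 = a ∧
      ((WithLp.equiv p (∀ _ : Fin 2, ℂ)).symm ![a, b]) 1 = b := by
    intro a b; constructor <;> simp [WithLp.equiv_symm_apply]
  have norm_half : ∀ z : ℂ, ‖z / 2‖ = ‖z‖ / 2 := by
    intro z; rw [norm_div]; norm_num
  refine ⟨?_, ?_, ?_⟩
  · -- ‖e‖ = 1
    apply le_antisymm
    · apply e.opNorm_le_bound zero_le_one
      intro x
      rw [one_mul, hnorm (e x), hnorm x, he x 0, he x 1, norm_half]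
      exact key _ _ _ (by positivity) (norm_nonneg _) (norm_nonneg _) (norm_add_le _ _)
    · set v := (WithLp.equiv p (∀ _ : Fin 2, ℂ)).symm ![1, 1] with hv
      have hv0 : v 0 = 1 := (hvec 1 1).1
      have hv1 : v 1 = 1 := (hvec 1 1).2
      have hev : e v = v := by
        refine PiLp.ext fun i => ?_
        rw [he v i, hv0, hv1]
        have hvi : v i = 1 := by
          fin_cases i <;> simp [hv, WithLp.equiv_symm_apply]
        rw [hvi]; norm_num
      have hnv : ‖v‖ = (2 : ℝ) ^ (1 / r) := by
        rw [hnorm v, hv0, hv1, norm_one, Real.one_rpow]; norm_num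
      have hvpos : 0 < ‖v‖ := by rw [hnv]; positivity
      have h := e.le_opNorm v
      rw [hev] at h
      exact le_of_mul_le_mul_right (by rw [one_mul]; exact h) hvpos
  · -- ‖1 - e‖ = 1
    have hf : ∀ (x : PiLp p (fun _ : Fin 2 => ℂ)) (i : Fin 2),
        ((1 - e) x) i = x i - (x 0 + x 1) / 2 := by
      intro x i
      rw [ContinuousLinearMap.sub_apply, ContinuousLinearMap.one_apply]
      have : (x - e x) i = x i - (e x) i := rfl
      rw [this, he]
    apply le_antisymm
    · apply ContinuousLinearMap.opNorm_le_bound _ zero_le_one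
      intro x
      rw [one_mul, hnorm ((1 - e) x), hnorm x, hf x 0, hf x 1]
      have h0 : x 0 - (x 0 + x 1) / 2 = (x 0 - x 1) / 2 := by ring
      have h1 : x 1 - (x 0 + x 1) / 2 = (x 1 - x 0) / 2 := by ring
      rw [h0, h1, norm_half, norm_half, norm_sub_rev (x 1) (x 0)]
      exact key _ _ _ (by positivity) (norm_nonneg _) (norm_nonneg _) (norm_sub_le _ _)
    · set w := (WithLp.equiv p (∀ _ : Fin 2, ℂ)).symm ![1, -1] with hw
      have hw0 : w 0 = 1 := (hvec 1 (-1)).1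
      have hw1 : w 1 = -1 := (hvec 1 (-1)).2
      have hew : (1 - e) w = w := by
        refine PiLp.ext fun i => ?_
        rw [hf w i, hw0, hw1]
        norm_num
      have hnw : ‖w‖ = (2 : ℝ) ^ (1 / r) := by
        rw [hnorm w, hw0, hw1, norm_one, norm_neg, norm_one, Real.one_rpow]; norm_num
      have hwpos : 0 < ‖w‖ := by rw [hnw]; positivity
      have h := (1 - e).le_opNorm w
      rw [hew] at h
      exact le_of_mul_le_mul_right (by rw [one_mul]; exact h) hwpos
  · -- the exponential
    refine ⟨Real.pi / 2, ?_⟩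
    set c : ℂ := ((Real.pi / 2 : ℝ) : ℂ) * Complex.I with hc_def
    have hc : Complex.exp c = Complex.I := by
      rw [hc_def, Complex.exp_mul_I, ← Complex.ofReal_cos, ← Complex.ofReal_sin,
        Real.cos_pi_div_two, Real.sin_pi_div_two]
      simp
    have hee : e * e = e := by
      refine ContinuousLinearMap.ext fun x => PiLp.ext fun i => ?_
      simp only [ContinuousLinearMap.mul_apply, he]
      ring
    have hT : NormedSpace.exp (c • e) = 1 + (Complex.I - 1) • e := by
      rw [exp_idem e hee c,
        show NormedSpace.exp c = Complex.exp c from (congrFun Complex.exp_eq_exp_ℂ c).symm, hc]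
    have hTx : ∀ (x : PiLp p (fun _ : Fin 2 => ℂ)) (i : Fin 2),
        (NormedSpace.exp (c • e)) x i = x i + (Complex.I - 1) * ((x 0 + x 1) / 2) := by
      intro x i
      rw [hT]
      rw [ContinuousLinearMap.add_apply, ContinuousLinearMap.one_apply,
        ContinuousLinearMap.smul_apply]
      have h1 : (x + (Complex.I - 1) • (e x)) i = x i + ((Complex.I - 1) • (e x)) i := rfl
      have h2 : ((Complex.I - 1) • (e x)) i = (Complex.I - 1) * (e x) i := rfl
      rw [h1, h2, he]
    set T := NormedSpace.exp (c • e) with hT_def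
    -- norm of complex numbers with normSq 1/2
    have habs : ∀ z : ℂ, Complex.normSq z = 1 / 2 → ‖z‖ = (2 : ℝ) ^ (-(1/2) : ℝ) := by
      intro z hz
      rw [Complex.norm_def, hz, Real.sqrt_eq_rpow,
        show ((1:ℝ)/2) = 2⁻¹ by norm_num, Real.inv_rpow (by norm_num), ← Real.rpow_neg_one,
        ← Real.rpow_mul (by norm_num)]
      norm_num
    have hpow2 : (((2:ℝ) ^ (-(1/2) : ℝ)) ^ r + ((2:ℝ) ^ (-(1/2) : ℝ)) ^ r) ^ (1/r)
        = (2:ℝ) ^ ((1 - r/2) * (1/r)) := by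
      rw [← Real.rpow_mul (by norm_num : (0:ℝ) ≤ 2)]
      rw [show ((2:ℝ) ^ (-(1/2) * r) + (2:ℝ) ^ (-(1/2) * r)) = 2 ^ (1:ℝ) * 2 ^ (-(1/2) * r) by
        rw [Real.rpow_one]; ring]
      rw [← Real.rpow_add (by norm_num : (0:ℝ) < 2),
        ← Real.rpow_mul (by norm_num : (0:ℝ) ≤ 2)]
      congr 1
      ring
    rcases lt_or_gt_of_ne hr2 with hlt | hgt
    · -- r < 2 : use u = (1, 0)
      set u := (WithLp.equiv p (∀ _ : Fin 2, ℂ)).symm ![1, 0] with hu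
      have hu0 : u 0 = 1 := (hvec 1 0).1
      have hu1 : u 1 = 0 := (hvec 1 0).2
      have hnu : ‖u‖ = 1 := by
        rw [hnorm u, hu0, hu1, norm_one, norm_zero, Real.one_rpow,
          Real.zero_rpow hr0.ne', add_zero, Real.one_rpow]
      have hTu0 : T u 0 = (1 + Complex.I) / 2 := by
        rw [hTx u 0, hu0, hu1]; ring
      have hTu1 : T u 1 = (Complex.I - 1) / 2 := by
        rw [hTx u 1, hu0, hu1]; ring
      have hnTu : ‖T u‖ = (2:ℝ) ^ ((1 - r/2) * (1/r)) := by
        rw [hnorm (T u), hTu0, hTu1,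
          habs _ (by simp [Complex.normSq_apply, Complex.div_re, Complex.div_im]; norm_num),
          habs _ (by simp [Complex.normSq_apply, Complex.div_re, Complex.div_im]; norm_num),
          hpow2]
      have hbig : 1 < ‖T u‖ := by
        rw [hnTu]
        rw [show (1:ℝ) = (2:ℝ) ^ (0:ℝ) by rw [Real.rpow_zero]]
        apply Real.rpow_lt_rpow_left_iff (by norm_num : (1:ℝ) < 2) |>.mpr
        apply mul_pos (by linarith) (by positivity)
      have h := T.le_opNorm u
      rw [hnu, mul_one] at h
      linarith
    · -- r > 2 : use w = ((1 - I)/2, (-1 - I)/2)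
      set w := (WithLp.equiv p (∀ _ : Fin 2, ℂ)).symm
        ![(1 - Complex.I) / 2, (-1 - Complex.I) / 2] with hw
      have hw0 : w 0 = (1 - Complex.I) / 2 := (hvec _ _).1
      have hw1 : w 1 = (-1 - Complex.I) / 2 := (hvec _ _).2
      have hnw : ‖w‖ = (2:ℝ) ^ ((1 - r/2) * (1/r)) := by
        rw [hnorm w, hw0, hw1,
          habs _ (by simp [Complex.normSq_apply, Complex.div_re, Complex.div_im]; norm_num),
          habs _ (by simp [Complex.normSq_apply, Complex.div_re, Complex.div_im]; norm_num),
          hpow2]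
      have hTw0 : T w 0 = 1 := by
        rw [hTx w 0, hw0, hw1]
        have : Complex.I * Complex.I = -1 := Complex.I_mul_I
        field_simp
        ring_nf
        rw [Complex.I_sq]
        ring
      have hTw1 : T w 1 = 0 := by
        rw [hTx w 1, hw0, hw1]
        ring_nf
        rw [Complex.I_sq]
        ring
      have hnTw : ‖T w‖ = 1 := by
        rw [hnorm (T w), hTw0, hTw1, norm_one, norm_zero, Real.one_rpow,
          Real.zero_rpow hr0.ne', add_zero, Real.one_rpow]
      have hwlt : ‖w‖ < 1 := by
        rw [hnw]
        apply Real.rpow_lt_one_of_one_lt_of_neg (by norm_num : (1:ℝ) < 2)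
        apply mul_neg_of_neg_of_pos (by linarith) (by positivity)
      have hwpos : 0 < ‖w‖ := by rw [hnw]; positivity
      have h := T.le_opNorm w
      rw [hnTw] at h
      nlinarith [norm_nonneg T]
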